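/- arXiv:1404.2641 — 2 statements merged into one kernel-verified Lean document; each statement's English description precedes it below -/
import Mathlib

section
/- Let φ : (R, m) → (S, n) be an injective local homomorphism of Noetherian local rings, and let φ̂ : R̂ → Ŝ be the induced map on completions. Then φ̂ is injective if and only if for each positive integer k there exists a positive integer s such that n^s ∩ R ⊆ m^k. -/
open Submodule IsLocalRing

section Transfer

/-- If the algebra map `R → S` is surjective, then an Artinian `S`-module is Artinian
as an `R`-module. -/
theorem isArtinian_of_surjective_algebraMap' {R S M : Type*} [CommRing R] [CommRing S]
    [AddCommGroup M] [Algebra R S] [Module S M] [Module R M] [IsScalarTower R S M]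
    (h : Function.Surjective (algebraMap R S)) [IsArtinian S M] : IsArtinian R M := by
  let g : Submodule R M → Submodule S M := fun p =>
    { carrier := p
      add_mem' := fun ha hb => p.add_mem ha hb
      zero_mem' := p.zero_mem
      smul_mem' := by
        intro c x hx
        obtain ⟨r, rfl⟩ := h c
        rw [algebraMap_smul]
        exact p.smul_mem r hx }
  have key : ∀ p q : Submodule R M, g p ≤ g q ↔ p ≤ q := fun p q => Iff.rfl
  have hg : StrictMono g := by
    intro p q hpq
    rw [lt_iff_le_not_ge] at hpq ⊢
    exact ⟨(key p q).mpr hpq.1, fun c => hpq.2 ((key q p).mp c)⟩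
  exact hg.wellFoundedLT

end Transfer

attribute [local instance] Ideal.Quotient.field

/-- The quotient of a Noetherian local ring by a power of its maximal ideal is an Artinian
module over the ring. -/
theorem isArtinian_quotient_pow_maximalIdeal (R : Type*) [CommRing R] [IsNoetherianRing R]
    [IsLocalRing R] (j : ℕ) :
    IsArtinian R (R ⧸ (maximalIdeal R ^ j : Ideal R)) := by
  induction j with
  | zero =>
      have h : (maximalIdeal R ^ 0 : Ideal R) = ⊤ := by rw [pow_zero, Ideal.one_eq_top]
      have : Subsingleton (R ⧸ (⊤ : Ideal R)) :=
        Submodule.Quotient.subsingleton_iff.mpr rfl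
      exact isArtinian_of_linearEquiv (Submodule.quotEquivOfEq _ _ h.symm)
  | succ j ih =>
      set m : Ideal R := maximalIdeal R with hm
      have hpq : (m ^ (j + 1) : Ideal R) ≤ m ^ j := Ideal.pow_le_pow_right (Nat.le_succ j)
      set N : Submodule R (R ⧸ (m ^ (j+1) : Ideal R)) :=
        Submodule.map (m ^ (j+1) : Ideal R).mkQ (m ^ j : Ideal R) with hN
      refine (isArtinian_iff_submodule_quotient N).mpr ⟨?_, ?_⟩
      · -- `N` is a finite module killed by `m`, hence a finite module over the residue field
        have htor : Module.IsTorsionBySet R N (m : Set R) := by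
          rintro ⟨x, hx⟩ ⟨r, hr⟩
          obtain ⟨y, hy, rfl⟩ := hx
          apply Subtype.ext
          show r • Submodule.Quotient.mk y = 0
          rw [← Submodule.Quotient.mk_smul, Submodule.Quotient.mk_eq_zero]
          have : r • y ∈ m * m ^ j := Ideal.mul_mem_mul hr hy
          rwa [← pow_succ'] at this
        letI : Module (R ⧸ m) N := htor.module
        letI : IsScalarTower R (R ⧸ m) N := htor.isScalarTower
        have hfg : N.FG := by
          apply Submodule.FG.map
          exact IsNoetherian.noetherian _
        haveI : Module.Finite R N := Module.Finite.iff_fg.mpr hfg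
        haveI : Module.Finite (R ⧸ m) N := Module.Finite.of_restrictScalars_finite R (R ⧸ m) N
        haveI : IsArtinian (R ⧸ m) N := isArtinian_of_fg_of_artinian' (R := R ⧸ m)
        refine isArtinian_of_surjective_algebraMap' (R := R) (S := R ⧸ m) ?_
        rw [Ideal.Quotient.algebraMap_eq]
        exact Ideal.Quotient.mk_surjective
      · exact isArtinian_of_linearEquiv
          (Submodule.quotientQuotientEquivQuotient _ _ hpq).symm

/-- For an injective local homomorphism `φ : (R,m) → (S,n)` of Noetherian local
rings, the induced map `φ̂ : R̂ → Ŝ` on adic completions (characterized by compatibility with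
the canonical maps and with the projections to the quotients mod powers) is injective iff for
each positive `k` there exists a positive `s` with `n^s ∩ R ⊆ m^k`. -/
theorem completion_map_injective_iff {R S : Type*} [CommRing R] [CommRing S]
    [IsNoetherianRing R] [IsNoetherianRing S] [IsLocalRing R] [IsLocalRing S]
    (φ : R →+* S) (hinj : Function.Injective φ) [IsLocalHom φ]
    (Φ : AdicCompletion (IsLocalRing.maximalIdeal R) R →+*
          AdicCompletion (IsLocalRing.maximalIdeal S) S)
    (hcomm : ∀ r : R,
      Φ (algebraMap R (AdicCompletion (IsLocalRing.maximalIdeal R) R) r) =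
        algebraMap S (AdicCompletion (IsLocalRing.maximalIdeal S) S) (φ r))
    (hcont : ∀ (k : ℕ) (x : AdicCompletion (IsLocalRing.maximalIdeal R) R),
      AdicCompletion.eval (IsLocalRing.maximalIdeal R) R k x = 0 →
        AdicCompletion.eval (IsLocalRing.maximalIdeal S) S k (Φ x) = 0) :
    Function.Injective Φ ↔
      ∀ k : ℕ, 0 < k → ∃ s : ℕ, 0 < s ∧
        (IsLocalRing.maximalIdeal S ^ s).comap φ ≤ IsLocalRing.maximalIdeal R ^ k := by
  have hsm : ∀ (j : ℕ), ((maximalIdeal R ^ j : Ideal R) • ⊤ : Submodule R R)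
      = (maximalIdeal R ^ j : Ideal R) := fun j => by rw [smul_eq_mul, Ideal.mul_top]
  have hsmS : ∀ (j : ℕ), ((maximalIdeal S ^ j : Ideal S) • ⊤ : Submodule S S)
      = (maximalIdeal S ^ j : Ideal S) := fun j => by rw [smul_eq_mul, Ideal.mul_top]
  constructor
  · -- forward direction
    intro hΦ k hk
    by_contra hcon
    push_neg at hcon
    set Iid : ℕ → Ideal R := fun s => (maximalIdeal S ^ s).comap φ with hIiddef
    have hIanti : ∀ {s t : ℕ}, s ≤ t → Iid t ≤ Iid s := fun hst =>
      Ideal.comap_mono (Ideal.pow_le_pow_right hst)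
    have hI : ∀ s, ¬ Iid s ≤ maximalIdeal R ^ k := fun s hle =>
      hcon (s+1) (Nat.succ_pos s) ((hIanti (Nat.le_succ s)).trans hle)
    -- stabilization of the chains (Iid s ⊔ m^j)_s
    have stab : ∀ j : ℕ, ∃ s0 : ℕ, ∀ t, s0 ≤ t →
        Iid t ⊔ (maximalIdeal R ^ j : Ideal R) = Iid s0 ⊔ (maximalIdeal R ^ j : Ideal R) := by
      intro j
      haveI := isArtinian_quotient_pow_maximalIdeal R j
      let f : ℕ →o (Submodule R (R ⧸ (maximalIdeal R ^ j : Ideal R)))ᵒᵈ :=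
        ⟨fun s => OrderDual.toDual (Submodule.map (maximalIdeal R ^ j : Ideal R).mkQ (Iid s)),
         fun a b hab => OrderDual.toDual_le_toDual.mpr (Submodule.map_mono (hIanti hab))⟩
      obtain ⟨s0, hs0⟩ := IsArtinian.monotone_stabilizes f
      refine ⟨s0, fun t ht => ?_⟩
      have h2 : Submodule.map (maximalIdeal R ^ j : Ideal R).mkQ (Iid s0)
          = Submodule.map (maximalIdeal R ^ j : Ideal R).mkQ (Iid t) := hs0 t ht
      have h3 := congrArg (Submodule.comap (maximalIdeal R ^ j : Ideal R).mkQ) h2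
      rw [Submodule.comap_map_eq, Submodule.comap_map_eq, Submodule.ker_mkQ] at h3
      exact h3.symm
    choose σ hσ using stab
    set J : ℕ → Ideal R := fun j => Iid (σ j) ⊔ (maximalIdeal R ^ j : Ideal R) with hJdef
    have step : ∀ (j : ℕ) (r : R), r ∈ J j →
        ∃ r', r' ∈ J (j+1) ∧ r - r' ∈ (maximalIdeal R ^ j : Ideal R) := by
      intro j r hr
      have h1 : Iid (max (σ j) (σ (j+1))) ⊔ (maximalIdeal R ^ j : Ideal R) = J j :=
        hσ j _ (le_max_left _ _)
      rw [← h1] at hr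
      obtain ⟨a, ha, p, hp, hap⟩ := Submodule.mem_sup.mp hr
      refine ⟨a, ?_, ?_⟩
      · have h2 : Iid (max (σ j) (σ (j+1))) ⊔ (maximalIdeal R ^ (j+1) : Ideal R) = J (j+1) :=
          hσ (j+1) _ (le_max_right _ _)
        rw [← h2]
        exact Submodule.mem_sup_left ha
      · rw [← hap]
        simpa using hp
    choose F hF1 hF2 using step
    obtain ⟨r0, hr0I, hr0m⟩ := SetLike.not_le_iff_exists.mp (hI (σ k))
    have hr0J : r0 ∈ J k := Submodule.mem_sup_left hr0I
    let B : (i : ℕ) → {r : R // r ∈ J (k + i)} := fun i =>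
      Nat.rec ⟨r0, hr0J⟩ (fun i p => ⟨F (k + i) p.1 p.2, hF1 (k + i) p.1 p.2⟩) i
    let d : ℕ → R := fun j => (B (j - k)).1
    have hcauchy : ∀ j : ℕ,
        d j ≡ d (j+1) [SMOD ((maximalIdeal R ^ j : Ideal R) • ⊤ : Submodule R R)] := by
      intro j
      rw [SModEq.sub_mem, hsm j]
      by_cases h : k ≤ j
      · show (B (j - k)).1 - (B (j + 1 - k)).1 ∈ (maximalIdeal R ^ j : Ideal R)
        rw [show j + 1 - k = (j - k) + 1 from by omega]
        have hmem := hF2 (k + (j - k)) (B (j - k)).1 (B (j - k)).2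
        exact Ideal.pow_le_pow_right (by omega) hmem
      · show (B (j - k)).1 - (B (j + 1 - k)).1 ∈ (maximalIdeal R ^ j : Ideal R)
        rw [show j + 1 - k = j - k from by omega, sub_self]
        exact Submodule.zero_mem _
    let x : AdicCompletion (maximalIdeal R) R :=
      AdicCompletion.mk (maximalIdeal R) R
        (AdicCompletion.AdicCauchySequence.mk (maximalIdeal R) R d hcauchy)
    have hxval : ∀ j, x.val j = Submodule.Quotient.mk (d j) := fun j => rfl
    have hdJ : ∀ s, d s ∈ J (k + (s - k)) := fun s => (B (s - k)).2
    have hmap' : maximalIdeal R ≤ Ideal.comap φ (maximalIdeal S) := by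
      intro a ha
      rw [Ideal.mem_comap]
      rw [IsLocalRing.mem_maximalIdeal, mem_nonunits_iff] at ha
      rw [IsLocalRing.mem_maximalIdeal, mem_nonunits_iff]
      exact fun hu => ha (IsLocalHom.map_nonunit a hu)
    have hpow : ∀ j : ℕ, (maximalIdeal R ^ j : Ideal R)
        ≤ Ideal.comap φ ((maximalIdeal S ^ j : Ideal S)) := fun j => by
      rw [← Ideal.map_le_iff_le_comap, Ideal.map_pow]
      exact Ideal.pow_right_mono (Ideal.map_le_iff_le_comap.mpr hmap') j
    have hφd : ∀ s : ℕ, φ (d s) ∈ (maximalIdeal S ^ s : Ideal S) := by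
      intro s
      have h1 := hdJ s
      have hjs : s ≤ k + (s - k) := by omega
      have h2 : Iid (max (σ (k + (s - k))) (k + (s - k)))
            ⊔ (maximalIdeal R ^ (k + (s - k)) : Ideal R)
          = J (k + (s - k)) := hσ _ _ (le_max_left _ _)
      rw [← h2] at h1
      obtain ⟨a, ha, p, hp, hap⟩ := Submodule.mem_sup.mp h1
      rw [← hap, map_add]
      apply Ideal.add_mem
      · have h3 : φ a ∈ (maximalIdeal S ^ (max (σ (k + (s - k))) (k + (s - k))) : Ideal S) := ha
        exact Ideal.pow_le_pow_right (le_trans hjs (le_max_right _ _)) h3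
      · exact Ideal.pow_le_pow_right hjs (hpow _ hp)
    have hΦx : Φ x = 0 := by
      apply AdicCompletion.ext
      intro s
      have h0 : AdicCompletion.eval (maximalIdeal R) R s
          (x - algebraMap R (AdicCompletion (maximalIdeal R) R) (d s)) = 0 := by
        rw [map_sub, sub_eq_zero]
        show x.val s = (algebraMap R (AdicCompletion (maximalIdeal R) R) (d s)).val s
        rw [hxval s]
        rfl
      have h1 := hcont s _ h0
      rw [map_sub, map_sub, sub_eq_zero, hcomm] at h1
      rw [AdicCompletion.val_zero]
      show AdicCompletion.eval (maximalIdeal S) S s (Φ x) = 0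
      rw [h1]
      show Submodule.Quotient.mk (φ (d s)) = 0
      rw [Submodule.Quotient.mk_eq_zero, hsmS s]
      exact hφd s
    have hx0 : x = 0 := hΦ (by rw [hΦx, map_zero])
    have hvk : x.val k = Submodule.Quotient.mk (d k) := hxval k
    rw [hx0, AdicCompletion.val_zero] at hvk
    have hdk : d k = r0 := by
      show (B (k - k)).1 = r0
      rw [Nat.sub_self]
      rfl
    rw [hdk] at hvk
    have hmem : r0 ∈ ((maximalIdeal R ^ k : Ideal R) • ⊤ : Submodule R R) :=
      (Submodule.Quotient.mk_eq_zero _).mp hvk.symm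
    rw [hsm k] at hmem
    exact hr0m hmem
  · -- backward direction
    intro h
    have hker : ∀ x : AdicCompletion (maximalIdeal R) R, Φ x = 0 → x = 0 := by
      intro x hx0
      apply AdicCompletion.ext
      intro j
      obtain ⟨s, hs0, hs⟩ := h (j+1) (Nat.succ_pos j)
      have hjt : j ≤ max s (j+1) := le_trans (Nat.le_succ j) (le_max_right _ _)
      have h1 : Ideal.comap φ (maximalIdeal S ^ (max s (j+1))) ≤ (maximalIdeal R ^ j : Ideal R) := by
        refine le_trans (Ideal.comap_mono (Ideal.pow_le_pow_right (le_max_left _ _))) ?_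
        exact le_trans hs (Ideal.pow_le_pow_right (Nat.le_succ j))
      obtain ⟨r, hr⟩ := Submodule.Quotient.mk_surjective _ (x.val (max s (j+1)))
      have h0 : AdicCompletion.eval (maximalIdeal R) R (max s (j+1))
          (x - algebraMap R (AdicCompletion (maximalIdeal R) R) r) = 0 := by
        rw [map_sub, sub_eq_zero]
        show x.val (max s (j+1))
          = (algebraMap R (AdicCompletion (maximalIdeal R) R) r).val (max s (j+1))
        exact hr.symm
      have h2 := hcont (max s (j+1)) _ h0
      rw [map_sub, map_sub, hx0, map_zero, zero_sub, neg_eq_zero, hcomm] at h2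
      have h3 : Submodule.Quotient.mk (φ r) = (0 : S ⧸
          ((maximalIdeal S ^ (max s (j+1)) : Ideal S) • ⊤ : Submodule S S)) := h2
      rw [Submodule.Quotient.mk_eq_zero, hsmS] at h3
      have h4 : r ∈ (maximalIdeal R ^ j : Ideal R) := h1 (Ideal.mem_comap.mpr h3)
      have h5 : AdicCompletion.eval (maximalIdeal R) R j x
          = AdicCompletion.transitionMap (maximalIdeal R) R hjt (x.val (max s (j+1))) :=
        (AdicCompletion.transitionMap_comp_eval_apply (maximalIdeal R) R hjt x).symm
      show x.val j = (0 : AdicCompletion (maximalIdeal R) R).val j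
      rw [AdicCompletion.val_zero, Pi.zero_apply]
      have h6 : x.val j = AdicCompletion.transitionMap (maximalIdeal R) R hjt
          (x.val (max s (j+1))) := h5
      rw [h6, ← hr, show AdicCompletion.transitionMap (maximalIdeal R) R hjt (Submodule.Quotient.mk r)
        = Submodule.Quotient.mk r from rfl, Submodule.Quotient.mk_eq_zero, hsm j]
      exact h4
    intro a b hab
    have h3 : a - b = 0 := hker (a - b) (by rw [map_sub, hab, sub_self])
    exact sub_eq_zero.mp h3
end

section
/- Let S be a local domain essentially finitely generated over a field k, i.e., S = A_N/QA_N where A = k[x₁,…,x_r] is a polynomial ring, Q ⊂ N are primes of A with N of height s. Then there exists an extension field F of k and a finitely generated F-algebra domain D with a maximal ideal M such that S ≅ D_M. -/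
set_option synthInstance.maxHeartbeats 1000000
set_option maxHeartbeats 1000000


universe u

open Algebra

/-- Auxiliary: for a finite type domain `A` over a field `k` and a prime `P`, the localization
`A_P` is the localization of a finite type algebra over a field extension of `k` at a maximal
ideal. -/
theorem aux_loc (k : Type u) [Field k] (A : Type u) [CommRing A] [IsDomain A] [Algebra k A]
    [Algebra.FiniteType k A] (P : Ideal A) [hP : P.IsPrime] :
    ∃ (F : Type u) (_ : Field F) (_ : Algebra k F) (D : Type u) (_ : CommRing D)
      (_ : IsDomain D) (_ : Algebra F D) (_ : Algebra.FiniteType F D)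
      (M : Ideal D) (_ : M.IsMaximal) (_ : M.IsPrime),
        Nonempty (Localization.AtPrime P ≃+* Localization.AtPrime M) := by
  classical
  set Q := A ⧸ P with hQ
  let q : A →ₐ[k] Q := Ideal.Quotient.mkₐ k P
  have hinjk : Function.Injective (algebraMap k Q) := (algebraMap k Q).injective
  obtain ⟨s, hs⟩ := by
    haveI := (faithfulSMul_iff_algebraMap_injective k Q).mpr hinjk
    exact exists_isTranscendenceBasis k Q
  -- lift the transcendence basis to `A`
  have hlift : ∀ i : s, ∃ a : A, q a = (i : Q) := fun i =>
    Ideal.Quotient.mk_surjective (i : Q)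
  let t : s → A := fun i => (hlift i).choose
  have hqt : ∀ i : s, q (t i) = (i : Q) := fun i => (hlift i).choose_spec
  -- the polynomial subalgebra
  set B : Subalgebra k A := Algebra.adjoin k (Set.range t) with hB
  have hinj : ∀ b ∈ B, q b = 0 → b = 0 := by
    intro b hb h0
    rw [hB, Algebra.adjoin_range_eq_range_aeval] at hb
    rw [AlgHom.mem_range] at hb
    obtain ⟨p, hp⟩ := hb
    have h1 : MvPolynomial.aeval ((↑) : s → Q) p = 0 := by
      have h2 : (fun i => q (t i)) = ((↑) : s → Q) := funext hqt
      rw [← h2, ← MvPolynomial.comp_aeval_apply, hp, h0]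
    have hinj2 : Function.Injective
        ⇑(MvPolynomial.aeval ((↑) : s → Q) : MvPolynomial s k →ₐ[k] Q) := hs.1
    have hp0 : p = 0 := hinj2 (h1.trans (map_zero _).symm)
    rw [← hp, hp0, map_zero]
  -- the multiplicative set of nonzero elements of `B`
  let W : Submonoid A :=
    { carrier := {a : A | a ∈ B ∧ a ≠ 0}
      one_mem' := ⟨B.one_mem, one_ne_zero⟩
      mul_mem' := fun ha hb => ⟨B.mul_mem ha.1 hb.1, mul_ne_zero ha.2 hb.2⟩ }
  have hWle : W ≤ P.primeCompl := by
    rintro a ⟨haB, ha0⟩ hp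
    exact ha0 (hinj a haB (Ideal.Quotient.eq_zero_iff_mem.mpr hp))
  have hdisj : Disjoint (W : Set A) (P : Set A) :=
    Set.disjoint_left.mpr fun a haW haP => hWle haW haP
  -- the rings
  let D := Localization W
  haveI : IsDomain D :=
    IsLocalization.isDomain_localization (fun a ha => mem_nonZeroDivisors_of_ne_zero ha.2)
  let F := FractionRing B
  -- the map `F →+* D`
  have hgu : ∀ y : (nonZeroDivisors ↥B),
      IsUnit (((algebraMap A D).comp (algebraMap ↥B A)) y) := by
    intro y
    have hy0 : (y : ↥B) ≠ 0 := nonZeroDivisors.ne_zero y.2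
    have hyW : (algebraMap ↥B A (y : ↥B)) ∈ W := by
      refine ⟨(y : ↥B).2, ?_⟩
      intro h
      exact hy0 (by ext; exact h)
    exact IsLocalization.map_units D ⟨_, hyW⟩
  let g : F →+* D := IsLocalization.lift hgu
  letI : Algebra F D := g.toAlgebra
  have hgB : ∀ b : ↥B, algebraMap F D (algebraMap ↥B F b) = algebraMap A D (algebraMap ↥B A b) :=
    fun b => IsLocalization.lift_eq hgu b
  have htower : ∀ c : k, algebraMap A D (algebraMap k A c) = algebraMap F D (algebraMap k F c) := by
    intro c
    rw [IsScalarTower.algebraMap_apply k ↥B F c, hgB]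
    rw [← IsScalarTower.algebraMap_apply k ↥B A c]
  -- finite type
  obtain ⟨G, hG⟩ := (inferInstance : Algebra.FiniteType k A).out
  haveI hFT : Algebra.FiniteType F D := by
    refine ⟨⟨G.image (algebraMap A D), ?_⟩⟩
    rw [_root_.eq_top_iff]
    rintro x -
    have hA : ∀ a : A, algebraMap A D a ∈
        Algebra.adjoin F ((G.image (algebraMap A D) : Finset D) : Set D) := by
      intro a
      have ha : a ∈ Algebra.adjoin k (G : Set A) := hG ▸ trivial
      refine Algebra.adjoin_induction ?_ ?_ ?_ ?_ ha
      · intro y hy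
        exact Algebra.subset_adjoin (by
          simp only [Finset.coe_image, Set.mem_image, Finset.mem_coe]
          exact ⟨y, hy, rfl⟩)
      · intro c
        rw [htower c]
        exact Subalgebra.algebraMap_mem _ _
      · intro y z _ _ hy hz
        rw [map_add]; exact add_mem hy hz
      · intro y z _ _ hy hz
        rw [map_mul]; exact mul_mem hy hz
    obtain ⟨⟨a, w⟩, hx⟩ := IsLocalization.surj W x
    dsimp only at hx
    -- `x * wD = aD`, and `wD` has an inverse coming from `F`
    let wB : ↥B := ⟨(w : A), w.2.1⟩
    have hwB0 : algebraMap ↥B F wB ≠ 0 := by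
      intro h
      have : wB = 0 := IsFractionRing.injective ↥B F (by rw [h, map_zero])
      exact w.2.2 (by simpa [wB, Subtype.ext_iff] using this)
    have hwD : algebraMap A D (w : A) = algebraMap F D (algebraMap ↥B F wB) := by
      rw [hgB]; rfl
    have hxeq : x = algebraMap A D a * algebraMap F D ((algebraMap ↥B F wB)⁻¹) := by
      have hone : algebraMap A D (w : A) * algebraMap F D ((algebraMap ↥B F wB)⁻¹) = 1 := by
        rw [hwD, ← map_mul, mul_inv_cancel₀ hwB0, map_one]
      calc x = x * (algebraMap A D (w : A) * algebraMap F D ((algebraMap ↥B F wB)⁻¹)) := by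
              rw [hone, mul_one]
        _ = (x * algebraMap A D (w : A)) * algebraMap F D ((algebraMap ↥B F wB)⁻¹) := by ring
        _ = algebraMap A D a * algebraMap F D ((algebraMap ↥B F wB)⁻¹) := by rw [hx]
    rw [hxeq]
    exact mul_mem (hA a) (Subalgebra.algebraMap_mem _ _)
  -- the maximal ideal
  let M : Ideal D := P.map (algebraMap A D)
  have hMp : M.IsPrime := IsLocalization.isPrime_of_isPrime_disjoint W D P hP hdisj
  -- every element of `Q` is algebraic over the adjoined transcendence basis
  haveI halg := hs.isAlgebraic
  have hmapB : B.map q = Algebra.adjoin k (Set.range ((↑) : s → Q)) := by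
    rw [hB, AlgHom.map_adjoin]
    congr 1
    rw [← Set.range_comp]
    exact congrArg Set.range (funext hqt)
  -- units in the quotient
  have key : ∀ a : A, a ∉ P → IsUnit (Ideal.Quotient.mk M (algebraMap A D a)) := by
    intro a ha
    have ha0 : q a ≠ 0 := fun h => ha (Ideal.Quotient.eq_zero_iff_mem.mp h)
    have halga : IsAlgebraic ↥(Algebra.adjoin k (Set.range ((↑) : s → Q))) (q a) :=
      Algebra.IsAlgebraic.isAlgebraic _
    obtain ⟨r, hr0, hdvd⟩ :=
      halga.exists_nonzero_dvd (mem_nonZeroDivisors_of_ne_zero ha0)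
    have hrB : (r : Q) ∈ B.map q := by rw [hmapB]; exact r.2
    obtain ⟨b, hbB, hbq⟩ := hrB
    have hbq' : q b = (r : Q) := hbq
    have hb0 : b ≠ 0 := by
      intro h
      apply hr0
      have : (r : Q) = 0 := by rw [← hbq', h, map_zero]
      exact Subtype.ext this
    have hbW : b ∈ W := ⟨hbB, hb0⟩
    have hu : IsUnit (Ideal.Quotient.mk M (algebraMap A D b)) :=
      (IsLocalization.map_units D (⟨b, hbW⟩ : W)).map (Ideal.Quotient.mk M)
    let φ : Q →+* D ⧸ M := Ideal.quotientMap M (algebraMap A D) Ideal.le_comap_map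
    have hφ : ∀ x : A, φ (q x) = Ideal.Quotient.mk M (algebraMap A D x) := fun x =>
      Ideal.quotientMap_mk
    have hdvd' : φ (q a) ∣ φ (q b) := by
      have : algebraMap ↥(Algebra.adjoin k (Set.range ((↑) : s → Q))) Q r = (r : Q) := rfl
      rw [hbq']
      rw [this] at hdvd
      exact map_dvd φ hdvd
    rw [hφ, hφ] at hdvd'
    exact isUnit_of_dvd_unit hdvd' hu
  -- the quotient is a field
  haveI : Nontrivial (D ⧸ M) := Ideal.Quotient.nontrivial_iff.mpr hMp.ne_top
  have hfield : IsField (D ⧸ M) := by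
    refine ⟨exists_pair_ne _, mul_comm, ?_⟩
    intro x hx
    obtain ⟨d, rfl⟩ := Ideal.Quotient.mk_surjective x
    obtain ⟨⟨a, w⟩, hdw⟩ := IsLocalization.surj W d
    dsimp only at hdw
    have hw : IsUnit (Ideal.Quotient.mk M (algebraMap A D (w : A))) :=
      (IsLocalization.map_units D w).map (Ideal.Quotient.mk M)
    have heq : Ideal.Quotient.mk M d * Ideal.Quotient.mk M (algebraMap A D (w : A)) =
        Ideal.Quotient.mk M (algebraMap A D a) := by
      rw [← map_mul, hdw]
    have haP : a ∉ P := by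
      intro h
      apply hx
      have h0 : Ideal.Quotient.mk M (algebraMap A D a) = 0 :=
        Ideal.Quotient.eq_zero_iff_mem.mpr (Ideal.mem_map_of_mem _ h)
      obtain ⟨u, hu⟩ := hw
      have := heq
      rw [h0] at this
      calc Ideal.Quotient.mk M d
          = Ideal.Quotient.mk M d * ((u : D ⧸ M) * (↑u⁻¹ : D ⧸ M)) := by
            rw [u.mul_inv, mul_one]
        _ = (Ideal.Quotient.mk M d * (u : D ⧸ M)) * (↑u⁻¹ : D ⧸ M) := by ring
        _ = 0 := by rw [hu, this, zero_mul]
    have hud : IsUnit (Ideal.Quotient.mk M d) := by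
      have := key a haP
      rw [← heq] at this
      exact isUnit_of_mul_isUnit_left this
    obtain ⟨y, hy⟩ := hud.exists_right_inv
    exact ⟨y, hy⟩
  have hmax : M.IsMaximal := Ideal.Quotient.maximal_of_isField _ hfield
  -- the isomorphism
  haveI : IsLocalization.AtPrime (Localization.AtPrime M) (M.comap (algebraMap A D)) :=
    IsLocalization.isLocalization_isLocalization_atPrime_isLocalization W _ M
  have hcom : M.comap (algebraMap A D) = P :=
    IsLocalization.comap_map_of_isPrime_disjoint W D hP hdisj
  haveI hPc : (M.comap (algebraMap A D)).IsPrime := by rw [hcom]; exact hP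
  have hsub : P.primeCompl = (M.comap (algebraMap A D)).primeCompl := by
    ext x
    simp only [Ideal.primeCompl, Submonoid.mem_mk, Subsemigroup.mem_mk, Set.mem_compl_iff,
      SetLike.mem_coe, hcom]
  haveI : IsLocalization.AtPrime (Localization.AtPrime M) P := by
    rw [IsLocalization.AtPrime, hsub]; exact this
  exact ⟨F, inferInstance, inferInstance, D, inferInstance, inferInstance, inferInstance, hFT,
    M, hmax, hMp,
    ⟨(IsLocalization.algEquiv P.primeCompl (Localization.AtPrime P)
        (Localization.AtPrime M)).toRingEquiv⟩⟩

/-- A local domain `S` essentially finitely generated over a field `k` is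
isomorphic to the localization of a finitely generated algebra domain `D` over an extension
field `F` of `k` at a maximal ideal of `D`. -/
theorem essFiniteType_eq_localization_at_maximal (k : Type u) [Field k] (S : Type u)
    [CommRing S] [IsDomain S] [IsLocalRing S] [Algebra k S] [Algebra.EssFiniteType k S] :
    ∃ (F : Type u) (_ : Field F) (_ : Algebra k F) (D : Type u) (_ : CommRing D)
      (_ : IsDomain D) (_ : Algebra F D) (_ : Algebra.FiniteType F D)
      (M : Ideal D) (_ : M.IsMaximal) (_ : M.IsPrime),
        Nonempty (S ≃+* Localization.AtPrime M) := by
  classical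
  let A : Subalgebra k S := Algebra.EssFiniteType.subalgebra k S
  let P : Ideal ↥A := (IsLocalRing.maximalIdeal S).comap (algebraMap ↥A S)
  haveI hP : P.IsPrime :=
    Ideal.IsPrime.comap _ (hK := (IsLocalRing.maximalIdeal.isMaximal S).isPrime)
  have hcompl : P.primeCompl = Algebra.EssFiniteType.submonoid k S := by
    ext a
    simp only [Ideal.primeCompl, Submonoid.mem_mk, Subsemigroup.mem_mk, Set.mem_compl_iff,
      SetLike.mem_coe, Ideal.mem_comap, IsLocalRing.mem_maximalIdeal, mem_nonunits_iff, not_not,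
      Algebra.EssFiniteType.submonoid, Submonoid.mem_comap, IsUnit.mem_submonoid_iff, P]
    exact Iff.rfl
  haveI hloc : IsLocalization.AtPrime S P := by
    rw [IsLocalization.AtPrime, hcompl]
    exact Algebra.EssFiniteType.isLocalization k S
  obtain ⟨F, hF, hkF, D, hD, hDdom, hFD, hFT, M, hmax, hpr, ⟨e⟩⟩ := aux_loc k ↥A P
  have e₀ : S ≃+* Localization.AtPrime P :=
    (IsLocalization.algEquiv P.primeCompl S (Localization.AtPrime P)).toRingEquiv
  exact ⟨F, hF, hkF, D, hD, hDdom, hFD, hFT, M, hmax, hpr, ⟨e₀.trans e⟩⟩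
end
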